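/- For n ≡ 2 (mod 4) sufficiently large, the adjacency spectral radius of G = K₂ + ((n−2)/4)·K_{1,3} is strictly greater than the adjacency spectral radius of H = K₂ + (P₈ ∪ ((n−10)/4)·P₄). -/

import Mathlib

open Finset SimpleGraph

/-- The graph K₂ + ((n−2)/4)·K_{1,3} on `Fin n` (n ≡ 2 mod 4): vertices 0,1
are dominating, and the remaining n−2 vertices are partitioned into
consecutive groups of 4, each inducing a star K_{1,3} centered at its first
vertex. -/
def splitStarsGraph (n : ℕ) : SimpleGraph (Fin n) :=
  SimpleGraph.fromRel (fun u v =>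
    u.val < 2 ∨ (2 ≤ u.val ∧ 2 ≤ v.val ∧ (u.val - 2) / 4 = (v.val - 2) / 4 ∧
      (u.val - 2) % 4 = 0))

/-- The graph K₂ + (P₈ ∪ ((n−10)/4)·P₄) on `Fin n` (n ≡ 2 mod 4): vertices
0,1 are dominating, vertices 2..9 induce a path P₈, and the remaining
vertices are partitioned into consecutive groups of 4, each inducing a
path P₄. -/
def pathsGraph (n : ℕ) : SimpleGraph (Fin n) :=
  SimpleGraph.fromRel (fun u v =>
    u.val < 2 ∨ (2 ≤ u.val ∧ u.val + 1 = v.val ∧ v.val ≤ 9) ∨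
      (10 ≤ u.val ∧ u.val + 1 = v.val ∧ (u.val - 10) / 4 = (v.val - 10) / 4))

noncomputable instance (n : ℕ) : DecidableRel (splitStarsGraph n).Adj :=
  Classical.decRel _

noncomputable instance (n : ℕ) : DecidableRel (pathsGraph n).Adj :=
  Classical.decRel _

/-! ### Auxiliary machinery -/

lemma mulVec_apply' {n : ℕ} (G : SimpleGraph (Fin n)) [DecidableRel G.Adj]
    (x : Fin n → ℝ) (i : Fin n) :
    (G.adjMatrix ℝ).mulVec x i = ∑ j, if G.Adj i j then x j else 0 := by
  simp [Matrix.mulVec, dotProduct, SimpleGraph.adjMatrix_apply, ite_mul]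

lemma sum_ind {n : ℕ} (t : ℕ) (ht : t < n) (v : ℝ) :
    (∑ j : Fin n, if (j : ℕ) = t then v else 0) = v := by
  have h : ∀ j : Fin n, ((j : ℕ) = t) = (j = ⟨t, ht⟩) := by
    intro j; simp [Fin.ext_iff]
  simp_rw [h]; simp

/-- If a positive vector `w` satisfies `A w < r w` entrywise, then every
eigenvalue of the adjacency matrix is `< r`. -/
lemma eig_lt {n : ℕ} (G : SimpleGraph (Fin n)) [DecidableRel G.Adj] (w : Fin n → ℝ)
    (hw : ∀ i, 0 < w i) (r : ℝ)
    (hrow : ∀ i, (∑ j, if G.Adj i j then w j else 0) < r * w i)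
    (μ : ℝ) (y : Fin n → ℝ) (hy0 : y ≠ 0) (hy : (G.adjMatrix ℝ).mulVec y = μ • y) :
    μ < r := by
  obtain ⟨j0, hj0⟩ := Function.ne_iff.mp hy0
  rw [Pi.zero_apply] at hj0
  have : Nonempty (Fin n) := ⟨j0⟩
  obtain ⟨i0, -, hmax⟩ := Finset.exists_max_image Finset.univ (fun i => |y i| / w i)
    Finset.univ_nonempty
  set t := |y i0| / w i0 with htdef
  have hle : ∀ i, |y i| ≤ t * w i := by
    intro i
    have := hmax i (Finset.mem_univ i)
    exact (div_le_iff₀ (hw i)).mp this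
  have ht0 : 0 < t := by
    have h1 : 0 < |y j0| := abs_pos.mpr hj0
    have h2 := hle j0
    nlinarith [hw j0]
  have hyi0 : |y i0| = t * w i0 := (div_mul_cancel₀ _ (hw i0).ne').symm
  have heq : μ * y i0 = ∑ j, if G.Adj i0 j then y j else 0 := by
    have := congrFun hy i0
    rw [mulVec_apply'] at this
    rw [this]; simp [mul_comm]
  have habs : |μ| * |y i0| ≤ ∑ j, if G.Adj i0 j then |y j| else 0 := by
    rw [← abs_mul, heq]
    refine (Finset.abs_sum_le_sum_abs _ _).trans ?_
    apply Finset.sum_le_sum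
    intro j _
    split <;> simp
  have hstep : (∑ j, if G.Adj i0 j then |y j| else 0)
      ≤ t * ∑ j, if G.Adj i0 j then w j else 0 := by
    rw [Finset.mul_sum]
    apply Finset.sum_le_sum
    intro j _
    split
    · exact hle j
    · simp
  have hfin : |μ| * |y i0| < r * |y i0| := by
    calc |μ| * |y i0| ≤ t * ∑ j, if G.Adj i0 j then w j else 0 := habs.trans hstep
    _ < t * (r * w i0) := mul_lt_mul_of_pos_left (hrow i0) ht0
    _ = r * |y i0| := by rw [hyi0]; ring
  have hyi0pos : 0 < |y i0| := by rw [hyi0]; exact mul_pos ht0 (hw i0)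
  calc μ ≤ |μ| := le_abs_self μ
  _ < r := lt_of_mul_lt_mul_right hfin hyi0pos.le

lemma rowDom {n : ℕ} (G : SimpleGraph (Fin n)) [DecidableRel G.Adj] (x : Fin n → ℝ)
    (i : Fin n) (hadj : ∀ j, G.Adj i j ↔ j ≠ i) :
    (∑ j : Fin n, if G.Adj i j then x j else 0) = (∑ j : Fin n, x j) - x i := by
  have hpt : ∀ j : Fin n, (if G.Adj i j then x j else 0)
      = x j - (if j = i then x j else 0) := by
    intro j
    by_cases h : j = i
    · subst h; simp [hadj]
    · simp [hadj, h]
  rw [Finset.sum_congr rfl (fun j _ => hpt j), Finset.sum_sub_distrib,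
    Finset.sum_ite_eq' Finset.univ i x]
  simp

lemma row3 {n : ℕ} (G : SimpleGraph (Fin n)) [DecidableRel G.Adj] (x : Fin n → ℝ)
    (i : Fin n) (t1 t2 t3 : ℕ) (v1 v2 v3 : ℝ)
    (ht1 : t1 < n) (ht2 : t2 < n) (ht3 : t3 < n)
    (h : ∀ j : Fin n, (if G.Adj i j then x j else 0) =
      (if (j : ℕ) = t1 then v1 else 0) + (if (j : ℕ) = t2 then v2 else 0)
        + (if (j : ℕ) = t3 then v3 else 0)) :
    (∑ j : Fin n, if G.Adj i j then x j else 0) = v1 + v2 + v3 := by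
  rw [Finset.sum_congr rfl (fun j _ => h j)]
  simp only [Finset.sum_add_distrib]
  rw [sum_ind t1 ht1, sum_ind t2 ht2, sum_ind t3 ht3]

lemma row4 {n : ℕ} (G : SimpleGraph (Fin n)) [DecidableRel G.Adj] (x : Fin n → ℝ)
    (i : Fin n) (t1 t2 t3 t4 : ℕ) (v1 v2 v3 v4 : ℝ)
    (ht1 : t1 < n) (ht2 : t2 < n) (ht3 : t3 < n) (ht4 : t4 < n)
    (h : ∀ j : Fin n, (if G.Adj i j then x j else 0) =
      (if (j : ℕ) = t1 then v1 else 0) + (if (j : ℕ) = t2 then v2 else 0)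
        + (if (j : ℕ) = t3 then v3 else 0) + (if (j : ℕ) = t4 then v4 else 0)) :
    (∑ j : Fin n, if G.Adj i j then x j else 0) = v1 + v2 + v3 + v4 := by
  rw [Finset.sum_congr rfl (fun j _ => h j)]
  simp only [Finset.sum_add_distrib]
  rw [sum_ind t1 ht1, sum_ind t2 ht2, sum_ind t3 ht3, sum_ind t4 ht4]

/-! ### Adjacency characterizations -/

lemma adjG_iff {n : ℕ} (i j : Fin n) :
    (splitStarsGraph n).Adj i j ↔ ((i : ℕ) ≠ (j : ℕ) ∧
      ((i : ℕ) < 2 ∨ (j : ℕ) < 2 ∨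
        (2 ≤ (i : ℕ) ∧ 2 ≤ (j : ℕ) ∧ ((i : ℕ) - 2) / 4 = ((j : ℕ) - 2) / 4 ∧
          (((i : ℕ) - 2) % 4 = 0 ∨ ((j : ℕ) - 2) % 4 = 0)))) := by
  simp only [splitStarsGraph, SimpleGraph.fromRel_adj, ne_eq, Fin.ext_iff]
  omega

lemma adjH_iff {n : ℕ} (i j : Fin n) :
    (pathsGraph n).Adj i j ↔ ((i : ℕ) ≠ (j : ℕ) ∧
      ((i : ℕ) < 2 ∨ (j : ℕ) < 2 ∨
        (2 ≤ (i : ℕ) ∧ (i : ℕ) + 1 = (j : ℕ) ∧ (j : ℕ) ≤ 9) ∨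
        (2 ≤ (j : ℕ) ∧ (j : ℕ) + 1 = (i : ℕ) ∧ (i : ℕ) ≤ 9) ∨
        (10 ≤ (i : ℕ) ∧ (i : ℕ) + 1 = (j : ℕ) ∧ ((i : ℕ) - 10) / 4 = ((j : ℕ) - 10) / 4) ∨
        (10 ≤ (j : ℕ) ∧ (j : ℕ) + 1 = (i : ℕ) ∧ ((j : ℕ) - 10) / 4 = ((i : ℕ) - 10) / 4))) := by
  simp only [pathsGraph, SimpleGraph.fromRel_adj, ne_eq, Fin.ext_iff]
  omega

/-! ### Test vectors -/

noncomputable def pG (r : ℝ) : ℕ → ℝ := fun t =>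
  if t < 2 then r^2 - 3 else if (t - 2) % 4 = 0 then 2*(r+3) else 2*(r+1)

noncomputable def pH (r : ℝ) : ℕ → ℝ := fun t =>
  if t < 2 then (r^2-r-1)*(r^4-r^3-3*r^2+2*r+1)*(r^3-1)
  else if t = 2 ∨ t = 9 then r^3*(r^2-r-1)*(2*r^3-4*r)
  else if t = 3 ∨ t = 8 then r^3*(r^2-r-1)*(2*r^3+2*r^2-4*r-2)
  else if t = 4 ∨ t = 7 then r^3*(r^2-r-1)*(2*r^3+2*r^2-2*r-2)
  else if t = 5 ∨ t = 6 then r^3*(r^2-r-1)*(2*r^3+2*r^2-2*r)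
  else if (t - 10) % 4 = 0 ∨ (t - 10) % 4 = 3 then 2*r^4*(r^4-r^3-3*r^2+2*r+1)
  else 2*r^3*(r+1)*(r^4-r^3-3*r^2+2*r+1)

/-! ### Row sums for the stars graph -/

lemma rowG_center {n : ℕ} (hn : n % 4 = 2) (r : ℝ) (i : Fin n) (hi : 2 ≤ (i : ℕ))
    (h0 : ((i : ℕ) - 2) % 4 = 0) :
    (∑ j : Fin n, if (splitStarsGraph n).Adj i j then pG r (j : ℕ) else 0)
      = 2*(r^2-3) + 3*(2*(r+1)) := by
  have hin : (i : ℕ) < n := i.isLt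
  have hlt : (i : ℕ) + 3 < n := by omega
  have hpt : ∀ j : Fin n, (if (splitStarsGraph n).Adj i j then pG r (j : ℕ) else 0)
      = (if (j : ℕ) = 0 then (r^2-3) else 0) + (if (j : ℕ) = 1 then (r^2-3) else 0)
        + (if (j : ℕ) = (i : ℕ) + 1 then 2*(r+1) else 0)
        + (if (j : ℕ) = (i : ℕ) + 2 then 2*(r+1) else 0)
        + (if (j : ℕ) = (i : ℕ) + 3 then 2*(r+1) else 0) := by
    intro j
    have hjn : (j : ℕ) < n := j.isLt
    simp only [adjG_iff, pG]
    split_ifs <;> first | (exfalso; omega) | ring1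
  rw [Finset.sum_congr rfl (fun j _ => hpt j)]
  simp only [Finset.sum_add_distrib]
  rw [sum_ind 0 (by omega), sum_ind 1 (by omega), sum_ind _ (by omega : (i:ℕ)+1 < n),
    sum_ind _ (by omega : (i:ℕ)+2 < n), sum_ind _ hlt]
  ring

lemma rowG_leaf {n : ℕ} (hn : n % 4 = 2) (r : ℝ) (i : Fin n) (hi : 2 ≤ (i : ℕ))
    (h0 : ((i : ℕ) - 2) % 4 ≠ 0) :
    (∑ j : Fin n, if (splitStarsGraph n).Adj i j then pG r (j : ℕ) else 0)
      = 2*(r^2-3) + 2*(r+3) := by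
  have hin : (i : ℕ) < n := i.isLt
  have hpt : ∀ j : Fin n, (if (splitStarsGraph n).Adj i j then pG r (j : ℕ) else 0)
      = (if (j : ℕ) = 0 then (r^2-3) else 0) + (if (j : ℕ) = 1 then (r^2-3) else 0)
        + (if (j : ℕ) = (i : ℕ) - ((i : ℕ) - 2) % 4 then 2*(r+3) else 0) := by
    intro j
    have hjn : (j : ℕ) < n := j.isLt
    simp only [adjG_iff, pG]
    split_ifs <;> first | (exfalso; omega) | ring1
  rw [Finset.sum_congr rfl (fun j _ => hpt j)]
  simp only [Finset.sum_add_distrib]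
  rw [sum_ind 0 (by omega), sum_ind 1 (by omega),
    sum_ind _ (by omega : (i:ℕ) - ((i:ℕ)-2)%4 < n)]
  ring

lemma sumG (r : ℝ) (M : ℕ) :
    ∑ t ∈ Finset.range (4*M+2), pG r t = 2*(r^2-3) + M*(2*(r+3) + 3*(2*(r+1))) := by
  induction M with
  | zero => simp [Finset.sum_range_succ, pG]; ring
  | succ m ih =>
    have h1 : 4*(m+1)+2 = (4*m+2)+1+1+1+1 := by ring
    rw [h1, Finset.sum_range_succ, Finset.sum_range_succ, Finset.sum_range_succ,
      Finset.sum_range_succ, ih]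
    have e1 : pG r (4*m+2) = 2*(r+3) := by
      simp only [pG]; rw [if_neg (by omega), if_pos (by omega)]
    have e2 : pG r (4*m+2+1) = 2*(r+1) := by
      simp only [pG]; rw [if_neg (by omega), if_neg (by omega)]
    have e3 : pG r (4*m+2+1+1) = 2*(r+1) := by
      simp only [pG]; rw [if_neg (by omega), if_neg (by omega)]
    have e4 : pG r (4*m+2+1+1+1) = 2*(r+1) := by
      simp only [pG]; rw [if_neg (by omega), if_neg (by omega)]
    rw [e1, e2, e3, e4]
    push_cast
    ring

/-- The test vector is an exact eigenvector of the stars graph. -/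
lemma eigG {n : ℕ} (hn : n % 4 = 2) (r : ℝ)
    (key : (r-1)*(r^2-3) = ((n:ℝ)-2)*(2*r+3)) :
    ((splitStarsGraph n).adjMatrix ℝ).mulVec (fun j : Fin n => pG r (j : ℕ))
      = r • (fun j : Fin n => pG r (j : ℕ)) := by
  funext i
  rw [mulVec_apply', Pi.smul_apply, smul_eq_mul]
  by_cases hi : (i : ℕ) < 2
  · have hadj : ∀ j : Fin n, (splitStarsGraph n).Adj i j ↔ j ≠ i := by
      intro j
      rw [adjG_iff]
      constructor
      · rintro ⟨h1, -⟩ h2; exact h1 (by rw [h2])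
      · intro h2
        refine ⟨?_, Or.inl hi⟩
        intro hv; exact h2 (Fin.ext hv.symm)
    rw [rowDom _ _ _ hadj]
    have hM : 4*((n-2)/4)+2 = n := by omega
    have hsum : (∑ j : Fin n, pG r (j : ℕ))
        = 2*(r^2-3) + ((n-2)/4 : ℕ)*(2*(r+3) + 3*(2*(r+1))) := by
      rw [show (∑ j : Fin n, pG r (j:ℕ)) = ∑ t ∈ Finset.range n, pG r t from
        Fin.sum_univ_eq_sum_range (fun t => pG r t) n]
      rw [← hM, sumG]
      have h4 : (4*((n-2)/4)+2-2)/4 = (n-2)/4 := by omega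
      rw [h4]
    rw [hsum]
    have hpi : pG r (i : ℕ) = r^2-3 := by simp only [pG]; rw [if_pos hi]
    rw [hpi]
    have hMr : 4*(((n-2)/4 : ℕ) : ℝ) = (n:ℝ) - 2 := by
      have h : ((4*((n-2)/4)+2 : ℕ) : ℝ) = (n : ℝ) := by rw [hM]
      push_cast at h
      linarith
    linear_combination (2*r+3)*hMr - key
  · push_neg at hi
    by_cases h0 : ((i : ℕ) - 2) % 4 = 0
    · rw [rowG_center hn r i hi h0]
      have hpi : pG r (i : ℕ) = 2*(r+3) := by
        simp only [pG]; rw [if_neg (by omega), if_pos h0]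
      rw [hpi]; ring
    · rw [rowG_leaf hn r i hi h0]
      have hpi : pG r (i : ℕ) = 2*(r+1) := by
        simp only [pG]; rw [if_neg (by omega), if_neg h0]
      rw [hpi]; ring

/-! ### Total sum for the paths graph -/

lemma sumH (r : ℝ) (K : ℕ) :
    ∑ t ∈ Finset.range (4*K+10), pH r t
      = 2*((r^2-r-1)*(r^4-r^3-3*r^2+2*r+1)*(r^3-1))
        + 2*(r^3*(r^2-r-1)*(2*r^3-4*r) + r^3*(r^2-r-1)*(2*r^3+2*r^2-4*r-2)
            + r^3*(r^2-r-1)*(2*r^3+2*r^2-2*r-2) + r^3*(r^2-r-1)*(2*r^3+2*r^2-2*r))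
        + K*(2*(2*r^4*(r^4-r^3-3*r^2+2*r+1)) + 2*(2*r^3*(r+1)*(r^4-r^3-3*r^2+2*r+1))) := by
  induction K with
  | zero =>
    norm_num [Finset.sum_range_succ, pH]
    ring
  | succ k ih =>
    have h1 : 4*(k+1)+10 = (4*k+10)+1+1+1+1 := by ring
    rw [h1, Finset.sum_range_succ, Finset.sum_range_succ, Finset.sum_range_succ,
      Finset.sum_range_succ, ih]
    have e1 : pH r (4*k+10) = 2*r^4*(r^4-r^3-3*r^2+2*r+1) := by
      simp only [pH]
      rw [if_neg (by omega), if_neg (by omega), if_neg (by omega), if_neg (by omega),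
        if_neg (by omega), if_pos (by omega)]
    have e2 : pH r (4*k+10+1) = 2*r^3*(r+1)*(r^4-r^3-3*r^2+2*r+1) := by
      simp only [pH]
      rw [if_neg (by omega), if_neg (by omega), if_neg (by omega), if_neg (by omega),
        if_neg (by omega), if_neg (by omega)]
    have e3 : pH r (4*k+10+1+1) = 2*r^3*(r+1)*(r^4-r^3-3*r^2+2*r+1) := by
      simp only [pH]
      rw [if_neg (by omega), if_neg (by omega), if_neg (by omega), if_neg (by omega),
        if_neg (by omega), if_neg (by omega)]
    have e4 : pH r (4*k+10+1+1+1) = 2*r^4*(r^4-r^3-3*r^2+2*r+1) := by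
      simp only [pH]
      rw [if_neg (by omega), if_neg (by omega), if_neg (by omega), if_neg (by omega),
        if_neg (by omega), if_pos (by omega)]
    rw [e1, e2, e3, e4]
    push_cast
    ring

set_option maxHeartbeats 3200000 in
/-- For n ≡ 2 (mod 4) sufficiently large, the adjacency spectral radius of
K₂ + ((n−2)/4)·K_{1,3} is strictly greater than that of
K₂ + (P₈ ∪ ((n−10)/4)·P₄). -/
theorem stmt_15 :
    ∃ N : ℕ, ∀ n : ℕ, N ≤ n → n % 4 = 2 →
      ∀ (lG lH : ℝ),
        (∃ x : Fin n → ℝ, x ≠ 0 ∧ ((splitStarsGraph n).adjMatrix ℝ).mulVec x = lG • x) →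
        (∀ (μ : ℝ) (y : Fin n → ℝ), y ≠ 0 →
          ((splitStarsGraph n).adjMatrix ℝ).mulVec y = μ • y → μ ≤ lG) →
        (∃ x : Fin n → ℝ, x ≠ 0 ∧ ((pathsGraph n).adjMatrix ℝ).mulVec x = lH • x) →
        (∀ (μ : ℝ) (y : Fin n → ℝ), y ≠ 0 →
          ((pathsGraph n).adjMatrix ℝ).mulVec y = μ • y → μ ≤ lH) →
        lH < lG := by
  refine ⟨1000, fun n hn hmod lG lH hGex hGmax hHex _ => ?_⟩
  -- basic numeric facts about n
  have hnR : (1000:ℝ) ≤ (n:ℝ) := by exact_mod_cast hn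
  -- the root r of the cubic
  have h14n : (14:ℝ) ≤ (n:ℝ) := by linarith
  have hcont : ContinuousOn (fun x : ℝ => x^3 - x^2 + (1-2*(n:ℝ))*x + 9 - 3*(n:ℝ))
      (Set.Icc (14:ℝ) (n:ℝ)) := by fun_prop
  have hf14 : (fun x : ℝ => x^3 - x^2 + (1-2*(n:ℝ))*x + 9 - 3*(n:ℝ)) 14 ≤ 0 := by
    simp only
    nlinarith
  have hfn : 0 ≤ (fun x : ℝ => x^3 - x^2 + (1-2*(n:ℝ))*x + 9 - 3*(n:ℝ)) (n:ℝ) := by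
    simp only
    nlinarith
  obtain ⟨r, hrmem, hfr⟩ := intermediate_value_Icc h14n hcont ⟨hf14, hfn⟩
  have h14 : (14:ℝ) ≤ r := hrmem.1
  simp only at hfr
  have key : (r-1)*(r^2-3) = ((n:ℝ)-2)*(2*r+3) := by linear_combination hfr
  -- positivity facts
  have hrpos : (0:ℝ) < r := by linarith
  have hP : (0:ℝ) < r^2-3 := by nlinarith
  have hQ : (0:ℝ) < r^2-r-1 := by nlinarith
  have hD : (0:ℝ) < r^4-r^3-3*r^2+2*r+1 := by nlinarith
  have hr3 : (0:ℝ) < r^3-1 := by nlinarith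
  have hQD : (0:ℝ) < (r^2-r-1)*(r^4-r^3-3*r^2+2*r+1) := mul_pos hQ hD
  -- G side: r ≤ lG
  have hxGne : (fun j : Fin n => pG r (j : ℕ)) ≠ 0 := by
    have h0n : 0 < n := by omega
    intro hcon
    have := congrFun hcon ⟨0, h0n⟩
    simp only [pG, Pi.zero_apply] at this
    rw [if_pos (by norm_num)] at this
    nlinarith
  have hrlG : r ≤ lG := hGmax r _ hxGne (eigG hmod r key)
  -- H side: lH < r
  obtain ⟨y, hy0, hy⟩ := hHex
  have hwpos : ∀ i : Fin n, 0 < pH r (i : ℕ) := by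
    intro i
    have hu1 : (0:ℝ) < 2*r^3-4*r := by nlinarith
    have hu2 : (0:ℝ) < 2*r^3+2*r^2-4*r-2 := by nlinarith
    have hu3 : (0:ℝ) < 2*r^3+2*r^2-2*r-2 := by nlinarith
    have hu4 : (0:ℝ) < 2*r^3+2*r^2-2*r := by nlinarith
    have hr3p : (0:ℝ) < r^3 := by positivity
    have hr4p : (0:ℝ) < r^4 := by positivity
    simp only [pH]
    split_ifs
    · exact mul_pos hQD hr3
    · exact mul_pos (mul_pos hr3p hQ) hu1
    · exact mul_pos (mul_pos hr3p hQ) hu2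
    · exact mul_pos (mul_pos hr3p hQ) hu3
    · exact mul_pos (mul_pos hr3p hQ) hu4
    · positivity
    · have : (0:ℝ) < r + 1 := by linarith
      positivity
  -- the strict row inequalities for H
  have hK : 4*((n-10)/4) + 10 = n := by omega
  have hKr : 4*(((n-10)/4 : ℕ) : ℝ) = (n:ℝ) - 10 := by
    have h : ((4*((n-10)/4)+10 : ℕ) : ℝ) = (n : ℝ) := by rw [hK]
    push_cast at h
    linarith
  have hrow : ∀ i : Fin n,
      (∑ j : Fin n, if (pathsGraph n).Adj i j then pH r (j : ℕ) else 0)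
        < r * pH r (i : ℕ) := by
    intro i
    have hin : (i : ℕ) < n := i.isLt
    by_cases hi : (i : ℕ) < 2
    · -- dominating vertices
      have hadj : ∀ j : Fin n, (pathsGraph n).Adj i j ↔ j ≠ i := by
        intro j
        rw [adjH_iff]
        constructor
        · rintro ⟨h1, -⟩ h2; exact h1 (by rw [h2])
        · intro h2
          refine ⟨?_, Or.inl hi⟩
          intro hv; exact h2 (Fin.ext hv.symm)
      rw [rowDom _ _ _ hadj]
      have hsum : (∑ j : Fin n, pH r (j : ℕ))
          = 2*((r^2-r-1)*(r^4-r^3-3*r^2+2*r+1)*(r^3-1))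
            + 2*(r^3*(r^2-r-1)*(2*r^3-4*r) + r^3*(r^2-r-1)*(2*r^3+2*r^2-4*r-2)
                + r^3*(r^2-r-1)*(2*r^3+2*r^2-2*r-2) + r^3*(r^2-r-1)*(2*r^3+2*r^2-2*r))
            + ((n-10)/4 : ℕ)*(2*(2*r^4*(r^4-r^3-3*r^2+2*r+1))
                + 2*(2*r^3*(r+1)*(r^4-r^3-3*r^2+2*r+1))) := by
        rw [show (∑ j : Fin n, pH r (j:ℕ)) = ∑ t ∈ Finset.range n, pH r t from
          Fin.sum_univ_eq_sum_range (fun t => pH r t) n]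
        rw [← hK, sumH]
        have h4 : (4*((n-10)/4)+10-10)/4 = (n-10)/4 := by omega
        rw [h4]
      rw [hsum]
      have hpi : pH r (i : ℕ)
          = (r^2-r-1)*(r^4-r^3-3*r^2+2*r+1)*(r^3-1) := by
        simp only [pH]; rw [if_pos hi]
      rw [hpi]
      -- the key polynomial inequality
      have hkk : 4*(((n-10)/4 : ℕ) : ℝ)*(2*r+3) = (r-1)*(r^2-3) - 16*r - 24 := by
        linear_combination (2*r+3)*hKr - key
      have hE0 : (0:ℝ) < 4*r^9 - 48*r^8 - 76*r^7 + 48*r^6 - 16*r^5 - 80*r^4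
          + 88*r^3 + 44*r^2 - 32*r - 12 := by
        have ht : (0:ℝ) ≤ r - 14 := by linarith
        nlinarith [pow_nonneg ht 2, pow_nonneg ht 3, pow_nonneg ht 4, pow_nonneg ht 5,
          pow_nonneg ht 6, pow_nonneg ht 7, pow_nonneg ht 8, pow_nonneg ht 9, ht]
      set K : ℝ := (((n-10)/4 : ℕ) : ℝ) with hKdef
      have hident : (r * ((r^2-r-1)*(r^4-r^3-3*r^2+2*r+1)*(r^3-1))
          - (((r^2-r-1)*(r^4-r^3-3*r^2+2*r+1)*(r^3-1))
            + 2*(r^3*(r^2-r-1)*(2*r^3-4*r) + r^3*(r^2-r-1)*(2*r^3+2*r^2-4*r-2)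
                + r^3*(r^2-r-1)*(2*r^3+2*r^2-2*r-2) + r^3*(r^2-r-1)*(2*r^3+2*r^2-2*r))
            + K*(2*(2*r^4*(r^4-r^3-3*r^2+2*r+1))
                + 2*(2*r^3*(r+1)*(r^4-r^3-3*r^2+2*r+1))))) * (4*(2*r+3))
          = (4*r^9 - 48*r^8 - 76*r^7 + 48*r^6 - 16*r^5 - 80*r^4
              + 88*r^3 + 44*r^2 - 32*r - 12) := by
        linear_combination (-(4*r^4*(r^4-r^3-3*r^2+2*r+1))
          - 4*r^3*(r+1)*(r^4-r^3-3*r^2+2*r+1))*hkk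
      have hfac : (0:ℝ) < 4*(2*r+3) := by linarith
      nlinarith [hident, hE0, hfac]
    · push_neg at hi
      by_cases hi9 : (i : ℕ) ≤ 9
      · -- the P8 vertices
        have hcase : (i:ℕ) = 2 ∨ (i:ℕ) = 3 ∨ (i:ℕ) = 4 ∨ (i:ℕ) = 5 ∨ (i:ℕ) = 6
            ∨ (i:ℕ) = 7 ∨ (i:ℕ) = 8 ∨ (i:ℕ) = 9 := by omega
        have hn10 : 10 < n := by omega
        have hAH : pH r 0 = (r^2-r-1)*(r^4-r^3-3*r^2+2*r+1)*(r^3-1) := by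
          simp only [pH]; norm_num
        rcases hcase with h|h|h|h|h|h|h|h
        · rw [row3 _ _ i 0 1 3 ((r^2-r-1)*(r^4-r^3-3*r^2+2*r+1)*(r^3-1))
            ((r^2-r-1)*(r^4-r^3-3*r^2+2*r+1)*(r^3-1)) (r^3*(r^2-r-1)*(2*r^3+2*r^2-4*r-2))
            (by omega) (by omega) (by omega) ?_]
          · have hpi : pH r (i:ℕ) = r^3*(r^2-r-1)*(2*r^3-4*r) := by
              rw [h]; simp only [pH]; norm_num
            rw [hpi]
            nlinarith [hQD]
          · intro j
            have hjn : (j : ℕ) < n := j.isLt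
            simp only [adjH_iff, pH]
            split_ifs <;> first | (exfalso; omega) | ring1
        · rw [row4 _ _ i 0 1 2 4 ((r^2-r-1)*(r^4-r^3-3*r^2+2*r+1)*(r^3-1))
            ((r^2-r-1)*(r^4-r^3-3*r^2+2*r+1)*(r^3-1)) (r^3*(r^2-r-1)*(2*r^3-4*r))
            (r^3*(r^2-r-1)*(2*r^3+2*r^2-2*r-2))
            (by omega) (by omega) (by omega) (by omega) ?_]
          · have hpi : pH r (i:ℕ) = r^3*(r^2-r-1)*(2*r^3+2*r^2-4*r-2) := by
              rw [h]; simp only [pH]; norm_num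
            rw [hpi]
            nlinarith [hQD]
          · intro j
            have hjn : (j : ℕ) < n := j.isLt
            simp only [adjH_iff, pH]
            split_ifs <;> first | (exfalso; omega) | ring1
        · rw [row4 _ _ i 0 1 3 5 ((r^2-r-1)*(r^4-r^3-3*r^2+2*r+1)*(r^3-1))
            ((r^2-r-1)*(r^4-r^3-3*r^2+2*r+1)*(r^3-1)) (r^3*(r^2-r-1)*(2*r^3+2*r^2-4*r-2))
            (r^3*(r^2-r-1)*(2*r^3+2*r^2-2*r))
            (by omega) (by omega) (by omega) (by omega) ?_]
          · have hpi : pH r (i:ℕ) = r^3*(r^2-r-1)*(2*r^3+2*r^2-2*r-2) := by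
              rw [h]; simp only [pH]; norm_num
            rw [hpi]
            nlinarith [hQD]
          · intro j
            have hjn : (j : ℕ) < n := j.isLt
            simp only [adjH_iff, pH]
            split_ifs <;> first | (exfalso; omega) | ring1
        · rw [row4 _ _ i 0 1 4 6 ((r^2-r-1)*(r^4-r^3-3*r^2+2*r+1)*(r^3-1))
            ((r^2-r-1)*(r^4-r^3-3*r^2+2*r+1)*(r^3-1)) (r^3*(r^2-r-1)*(2*r^3+2*r^2-2*r-2))
            (r^3*(r^2-r-1)*(2*r^3+2*r^2-2*r))
            (by omega) (by omega) (by omega) (by omega) ?_]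
          · have hpi : pH r (i:ℕ) = r^3*(r^2-r-1)*(2*r^3+2*r^2-2*r) := by
              rw [h]; simp only [pH]; norm_num
            rw [hpi]
            nlinarith [hQD]
          · intro j
            have hjn : (j : ℕ) < n := j.isLt
            simp only [adjH_iff, pH]
            split_ifs <;> first | (exfalso; omega) | ring1
        · rw [row4 _ _ i 0 1 5 7 ((r^2-r-1)*(r^4-r^3-3*r^2+2*r+1)*(r^3-1))
            ((r^2-r-1)*(r^4-r^3-3*r^2+2*r+1)*(r^3-1)) (r^3*(r^2-r-1)*(2*r^3+2*r^2-2*r))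
            (r^3*(r^2-r-1)*(2*r^3+2*r^2-2*r-2))
            (by omega) (by omega) (by omega) (by omega) ?_]
          · have hpi : pH r (i:ℕ) = r^3*(r^2-r-1)*(2*r^3+2*r^2-2*r) := by
              rw [h]; simp only [pH]; norm_num
            rw [hpi]
            nlinarith [hQD]
          · intro j
            have hjn : (j : ℕ) < n := j.isLt
            simp only [adjH_iff, pH]
            split_ifs <;> first | (exfalso; omega) | ring1
        · rw [row4 _ _ i 0 1 6 8 ((r^2-r-1)*(r^4-r^3-3*r^2+2*r+1)*(r^3-1))
            ((r^2-r-1)*(r^4-r^3-3*r^2+2*r+1)*(r^3-1)) (r^3*(r^2-r-1)*(2*r^3+2*r^2-2*r))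
            (r^3*(r^2-r-1)*(2*r^3+2*r^2-4*r-2))
            (by omega) (by omega) (by omega) (by omega) ?_]
          · have hpi : pH r (i:ℕ) = r^3*(r^2-r-1)*(2*r^3+2*r^2-2*r-2) := by
              rw [h]; simp only [pH]; norm_num
            rw [hpi]
            nlinarith [hQD]
          · intro j
            have hjn : (j : ℕ) < n := j.isLt
            simp only [adjH_iff, pH]
            split_ifs <;> first | (exfalso; omega) | ring1
        · rw [row4 _ _ i 0 1 7 9 ((r^2-r-1)*(r^4-r^3-3*r^2+2*r+1)*(r^3-1))
            ((r^2-r-1)*(r^4-r^3-3*r^2+2*r+1)*(r^3-1)) (r^3*(r^2-r-1)*(2*r^3+2*r^2-2*r-2))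
            (r^3*(r^2-r-1)*(2*r^3-4*r))
            (by omega) (by omega) (by omega) (by omega) ?_]
          · have hpi : pH r (i:ℕ) = r^3*(r^2-r-1)*(2*r^3+2*r^2-4*r-2) := by
              rw [h]; simp only [pH]; norm_num
            rw [hpi]
            nlinarith [hQD]
          · intro j
            have hjn : (j : ℕ) < n := j.isLt
            simp only [adjH_iff, pH]
            split_ifs <;> first | (exfalso; omega) | ring1
        · rw [row3 _ _ i 0 1 8 ((r^2-r-1)*(r^4-r^3-3*r^2+2*r+1)*(r^3-1))
            ((r^2-r-1)*(r^4-r^3-3*r^2+2*r+1)*(r^3-1)) (r^3*(r^2-r-1)*(2*r^3+2*r^2-4*r-2))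
            (by omega) (by omega) (by omega) ?_]
          · have hpi : pH r (i:ℕ) = r^3*(r^2-r-1)*(2*r^3-4*r) := by
              rw [h]; simp only [pH]; norm_num
            rw [hpi]
            nlinarith [hQD]
          · intro j
            have hjn : (j : ℕ) < n := j.isLt
            simp only [adjH_iff, pH]
            split_ifs <;> first | (exfalso; omega) | ring1
      · -- the P4 vertices
        push_neg at hi9
        have hi10 : 10 ≤ (i:ℕ) := by omega
        have hoff : ((i:ℕ)-10)%4 = 0 ∨ ((i:ℕ)-10)%4 = 1 ∨ ((i:ℕ)-10)%4 = 2
            ∨ ((i:ℕ)-10)%4 = 3 := by omega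
        rcases hoff with h|h|h|h
        · rw [row3 _ _ i 0 1 ((i:ℕ)+1) ((r^2-r-1)*(r^4-r^3-3*r^2+2*r+1)*(r^3-1))
            ((r^2-r-1)*(r^4-r^3-3*r^2+2*r+1)*(r^3-1)) (2*r^3*(r+1)*(r^4-r^3-3*r^2+2*r+1))
            (by omega) (by omega) (by omega) ?_]
          · have hpi : pH r (i:ℕ) = 2*r^4*(r^4-r^3-3*r^2+2*r+1) := by
              simp only [pH]
              rw [if_neg (by omega), if_neg (by omega), if_neg (by omega),
                if_neg (by omega), if_neg (by omega), if_pos (Or.inl h)]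
            rw [hpi]
            nlinarith [hQD]
          · intro j
            have hjn : (j : ℕ) < n := j.isLt
            simp only [adjH_iff, pH]
            split_ifs <;> first | (exfalso; omega) | ring1
        · rw [row4 _ _ i 0 1 ((i:ℕ)-1) ((i:ℕ)+1)
            ((r^2-r-1)*(r^4-r^3-3*r^2+2*r+1)*(r^3-1))
            ((r^2-r-1)*(r^4-r^3-3*r^2+2*r+1)*(r^3-1))
            (2*r^4*(r^4-r^3-3*r^2+2*r+1)) (2*r^3*(r+1)*(r^4-r^3-3*r^2+2*r+1))
            (by omega) (by omega) (by omega) (by omega) ?_]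
          · have hpi : pH r (i:ℕ) = 2*r^3*(r+1)*(r^4-r^3-3*r^2+2*r+1) := by
              simp only [pH]
              rw [if_neg (by omega), if_neg (by omega), if_neg (by omega),
                if_neg (by omega), if_neg (by omega), if_neg (by omega)]
            rw [hpi]
            nlinarith [hQD]
          · intro j
            have hjn : (j : ℕ) < n := j.isLt
            simp only [adjH_iff, pH]
            split_ifs <;> first | (exfalso; omega) | ring1
        · rw [row4 _ _ i 0 1 ((i:ℕ)-1) ((i:ℕ)+1)
            ((r^2-r-1)*(r^4-r^3-3*r^2+2*r+1)*(r^3-1))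
            ((r^2-r-1)*(r^4-r^3-3*r^2+2*r+1)*(r^3-1))
            (2*r^3*(r+1)*(r^4-r^3-3*r^2+2*r+1)) (2*r^4*(r^4-r^3-3*r^2+2*r+1))
            (by omega) (by omega) (by omega) (by omega) ?_]
          · have hpi : pH r (i:ℕ) = 2*r^3*(r+1)*(r^4-r^3-3*r^2+2*r+1) := by
              simp only [pH]
              rw [if_neg (by omega), if_neg (by omega), if_neg (by omega),
                if_neg (by omega), if_neg (by omega), if_neg (by omega)]
            rw [hpi]
            nlinarith [hQD]
          · intro j
            have hjn : (j : ℕ) < n := j.isLt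
            simp only [adjH_iff, pH]
            split_ifs <;> first | (exfalso; omega) | ring1
        · rw [row3 _ _ i 0 1 ((i:ℕ)-1) ((r^2-r-1)*(r^4-r^3-3*r^2+2*r+1)*(r^3-1))
            ((r^2-r-1)*(r^4-r^3-3*r^2+2*r+1)*(r^3-1)) (2*r^3*(r+1)*(r^4-r^3-3*r^2+2*r+1))
            (by omega) (by omega) (by omega) ?_]
          · have hpi : pH r (i:ℕ) = 2*r^4*(r^4-r^3-3*r^2+2*r+1) := by
              simp only [pH]
              rw [if_neg (by omega), if_neg (by omega), if_neg (by omega),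
                if_neg (by omega), if_neg (by omega), if_pos (Or.inr h)]
            rw [hpi]
            nlinarith [hQD]
          · intro j
            have hjn : (j : ℕ) < n := j.isLt
            simp only [adjH_iff, pH]
            split_ifs <;> first | (exfalso; omega) | ring1
  have hlHr : lH < r := by
    have := eig_lt (pathsGraph n) (fun j : Fin n => pH r (j : ℕ)) hwpos r hrow lH y hy0 hy
    exact this
  linarith
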